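/- For all integers 1 ≤ k ≤ d, one has n(k,d) ≥ d^k / k^k. -/

import Mathlib

/-- The three-letter alphabet `S = {0, 1, ∗}`. -/
inductive Tern | zero | one | star
deriving DecidableEq

instance instFintypeTern : Fintype Tern :=
  ⟨{Tern.zero, Tern.one, Tern.star}, fun x => by cases x <;> simp⟩

/-- `clash x y` is true iff both `x, y ∈ {0,1}` and `x ≠ y`. -/
def clash : Tern → Tern → Bool
  | Tern.zero, Tern.one => true
  | Tern.one, Tern.zero => true
  | _, _ => false

/-- `dist u v`: the number of positions where both letters are binary and they differ. -/
def dist {d : ℕ} (u v : Fin d → Tern) : ℕ :=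
  (Finset.univ.filter (fun i => clash (u i) (v i))).card

/-- A `k`-neighborly code in `S^d`: every two distinct members `u, v`
satisfy `1 ≤ dist(u,v) ≤ k`. -/
def IsNeighborlyCode (k d : ℕ) (V : Finset (Fin d → Tern)) : Prop :=
  ∀ u ∈ V, ∀ v ∈ V, u ≠ v → 1 ≤ dist u v ∧ dist u v ≤ k

/-- `n(k,d)`: the maximum size of a `k`-neighborly code in `S^d`. -/
noncomputable def nMax (k d : ℕ) : ℕ :=
  sSup {m : ℕ | ∃ V : Finset (Fin d → Tern), IsNeighborlyCode k d V ∧ V.card = m}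

/-! ### Auxiliary construction -/

/-- The staircase letter at position `r` of a block coded by `a`: ones before `a`,
zero at `a`, stars after. -/
def letter {m : ℕ} (a : Fin (m+1)) (r : ℕ) : Tern :=
  if r < (a : ℕ) then Tern.one else if r = (a : ℕ) then Tern.zero else Tern.star

lemma clash_letter {m : ℕ} (a b : Fin (m+1)) (r : ℕ) :
    clash (letter a r) (letter b r) = true ↔ a ≠ b ∧ r = min (a : ℕ) (b : ℕ) := by
  have hab : a ≠ b ↔ (a : ℕ) ≠ (b : ℕ) := by simp [Fin.ext_iff]
  unfold letter
  split_ifs with h1 h2 h3 h3 h4 <;> simp [clash, hab] <;> omega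

lemma div_lt_aux {k m i : ℕ} (h : i < k * m) : i / m < k := by
  rcases Nat.eq_zero_or_pos m with rfl | hm
  · omega
  · exact Nat.div_lt_of_lt_mul (by rwa [Nat.mul_comm] at h)

/-- The codeword associated to a choice `f` of one staircase code per block. -/
def word (k d m : ℕ) (f : Fin k → Fin (m+1)) (i : Fin d) : Tern :=
  if h : (i : ℕ) < k * m then
    letter (f ⟨(i : ℕ) / m, div_lt_aux h⟩) ((i : ℕ) % m)
  else Tern.star

lemma clash_word_iff (k d m : ℕ) (f g : Fin k → Fin (m+1)) (i : Fin d) :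
    clash (word k d m f i) (word k d m g i) = true ↔
      ∃ h : (i : ℕ) < k * m,
        f ⟨(i : ℕ) / m, div_lt_aux h⟩ ≠
        g ⟨(i : ℕ) / m, div_lt_aux h⟩ ∧
        (i : ℕ) % m = min ((f ⟨(i : ℕ) / m, div_lt_aux h⟩ : Fin (m+1)) : ℕ)
          ((g ⟨(i : ℕ) / m, div_lt_aux h⟩ : Fin (m+1)) : ℕ) := by
  unfold word
  split_ifs with h
  · rw [clash_letter]
    constructor
    · rintro ⟨hne, hr⟩; exact ⟨h, hne, hr⟩
    · rintro ⟨_, hne, hr⟩; exact ⟨hne, hr⟩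
  · simp [clash]
    intro h'; exact absurd h' h

lemma dist_word_le (k d m : ℕ) (f g : Fin k → Fin (m+1)) :
    dist (word k d m f) (word k d m g) ≤ k := by
  classical
  unfold _root_.dist
  have := Finset.card_le_card_of_injOn (f := fun i : Fin d => (i : ℕ) / m)
    (s := Finset.univ.filter (fun i => clash (word k d m f i) (word k d m g i)))
    (t := Finset.range k)
    (by
      intro i hi
      simp only [Finset.mem_coe, Finset.mem_filter, Finset.mem_univ, true_and] at hi
      rw [clash_word_iff] at hi
      obtain ⟨h, _, _⟩ := hi
      exact Finset.mem_range.mpr (div_lt_aux h))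
    (by
      intro i hi j hj hij
      simp only [Finset.coe_filter, Set.mem_setOf_eq] at hi hj
      rw [clash_word_iff] at hi hj
      obtain ⟨h1, hne1, hr1⟩ := hi.2
      obtain ⟨h2, hne2, hr2⟩ := hj.2
      have hA : (⟨(i : ℕ) / m, div_lt_aux h1⟩ : Fin k) = ⟨(j : ℕ) / m, div_lt_aux h2⟩ :=
        Fin.ext hij
      have hrm : (i : ℕ) % m = (j : ℕ) % m := by
        rw [hr1, hr2, hA]
      have hij' : (i : ℕ) / m = (j : ℕ) / m := hij
      have : (i : ℕ) = (j : ℕ) := by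
        have e1 := Nat.div_add_mod (i : ℕ) m
        have e2 := Nat.div_add_mod (j : ℕ) m
        have e3 : m * ((i : ℕ) / m) = m * ((j : ℕ) / m) := by rw [hij']
        omega
      exact Fin.ext this)
  simpa using this

lemma dist_word_pos (k d m : ℕ) (hm : 0 < m) (hkd : k * m ≤ d)
    (f g : Fin k → Fin (m+1)) (hfg : f ≠ g) :
    1 ≤ dist (word k d m f) (word k d m g) := by
  classical
  obtain ⟨q, hq⟩ := Function.ne_iff.mp hfg
  set r : ℕ := min ((f q : ℕ)) ((g q : ℕ)) with hr
  have hrm : r < m := by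
    have h1 : (f q : ℕ) < m + 1 := (f q).isLt
    have h2 : (g q : ℕ) < m + 1 := (g q).isLt
    have hne : (f q : ℕ) ≠ (g q : ℕ) := by
      intro h; exact hq (Fin.ext h)
    omega
  have hi : (q : ℕ) * m + r < d := by
    have hqk : (q : ℕ) < k := q.isLt
    calc (q : ℕ) * m + r < (q : ℕ) * m + m := by omega
    _ = ((q : ℕ) + 1) * m := by ring
    _ ≤ k * m := Nat.mul_le_mul_right m (by omega)
    _ ≤ d := hkd
  set i : Fin d := ⟨(q : ℕ) * m + r, hi⟩ with hidef
  have hdiv : (i : ℕ) / m = (q : ℕ) := by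
    simp only [hidef]
    rw [show (q : ℕ) * m + r = m * (q : ℕ) + r by ring, Nat.mul_add_div hm,
      Nat.div_eq_of_lt hrm]
    omega
  have hmod : (i : ℕ) % m = r := by
    simp only [hidef]
    rw [show (q : ℕ) * m + r = m * (q : ℕ) + r by ring, Nat.mul_add_mod,
      Nat.mod_eq_of_lt hrm]
  have hikm : (i : ℕ) < k * m := by
    have hqk : (q : ℕ) < k := q.isLt
    simp only [hidef]
    calc (q : ℕ) * m + r < ((q : ℕ) + 1) * m := by ring_nf; omega
    _ ≤ k * m := Nat.mul_le_mul_right m (by omega)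
  have hclash : clash (word k d m f i) (word k d m g i) = true := by
    rw [clash_word_iff]
    refine ⟨hikm, ?_, ?_⟩
    · have : (⟨(i : ℕ) / m, div_lt_aux hikm⟩ : Fin k) = q := Fin.ext hdiv
      rw [this]; exact hq
    · have hq' : (⟨(i : ℕ) / m, div_lt_aux hikm⟩ : Fin k) = q := Fin.ext hdiv
      rw [hq', hmod]
  unfold _root_.dist
  rw [Nat.one_le_iff_ne_zero, ← Nat.pos_iff_ne_zero, Finset.card_pos]
  exact ⟨i, Finset.mem_filter.mpr ⟨Finset.mem_univ i, hclash⟩⟩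

lemma tern_dist_self {d : ℕ} (u : Fin d → Tern) : dist u u = 0 := by
  unfold _root_.dist
  rw [Finset.card_eq_zero]
  ext i
  simp only [Finset.mem_filter, Finset.mem_univ, true_and, Finset.notMem_empty, iff_false]
  cases u i <;> simp [clash]

lemma word_injective (k d m : ℕ) (hm : 0 < m) (hkd : k * m ≤ d) :
    Function.Injective (word k d m) := by
  intro f g h
  by_contra hfg
  have h1 := dist_word_pos k d m hm hkd f g hfg
  rw [h, tern_dist_self] at h1
  omega

/-- Alon's lower bound: for `1 ≤ k ≤ d`, `n(k,d) ≥ d^k / k^k`. -/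
theorem n_lower_bound (k d : ℕ) (hk : 1 ≤ k) (hkd : k ≤ d) :
    (d : ℝ) ^ k / (k : ℝ) ^ k ≤ (nMax k d : ℝ) := by
  classical
  set m : ℕ := d / k with hm
  have hm1 : 1 ≤ m := Nat.one_le_div_iff (by omega) |>.mpr hkd
  have hkm : k * m ≤ d := by
    rw [hm, mul_comm]; exact Nat.div_mul_le_self d k
  -- the code
  set V : Finset (Fin d → Tern) := Finset.univ.image (word k d m) with hV
  have hcard : V.card = (m + 1) ^ k := by
    rw [hV, Finset.card_image_of_injective _ (word_injective k d m hm1 hkm)]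
    simp [Finset.card_univ]
  have hcode : IsNeighborlyCode k d V := by
    intro u hu v hv huv
    rw [hV, Finset.mem_image] at hu hv
    obtain ⟨f, _, rfl⟩ := hu
    obtain ⟨g, _, rfl⟩ := hv
    have hfg : f ≠ g := by rintro rfl; exact huv rfl
    exact ⟨dist_word_pos k d m hm1 hkm f g hfg, dist_word_le k d m f g⟩
  -- nMax ≥ (m+1)^k
  have hbdd : BddAbove {n : ℕ | ∃ V : Finset (Fin d → Tern),
      IsNeighborlyCode k d V ∧ V.card = n} := by
    refine ⟨Fintype.card (Fin d → Tern), ?_⟩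
    rintro n ⟨W, _, rfl⟩
    exact Finset.card_le_univ W
  have hle : (m + 1) ^ k ≤ nMax k d :=
    le_csSup hbdd ⟨V, hcode, hcard⟩
  -- real estimate
  have hk0 : (0 : ℝ) < (k : ℝ) := by exact_mod_cast hk
  have hdm : (d : ℝ) / (k : ℝ) ≤ ((m : ℝ) + 1) := by
    rw [div_le_iff₀ hk0]
    have : d < k * (m + 1) := by
      have h1 := Nat.div_add_mod d k
      have h2 : d % k < k := Nat.mod_lt d (by omega)
      have h3 : k * (m + 1) = k * (d / k) + k := by rw [hm]; ring
      omega
    calc (d : ℝ) ≤ (k * (m + 1) : ℕ) := by exact_mod_cast this.le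
    _ = ((m : ℝ) + 1) * (k : ℝ) := by push_cast; ring
  calc (d : ℝ) ^ k / (k : ℝ) ^ k = ((d : ℝ) / (k : ℝ)) ^ k := by
        rw [div_pow]
  _ ≤ ((m : ℝ) + 1) ^ k := by
        apply pow_le_pow_left₀ (by positivity) hdm
  _ = (((m + 1) ^ k : ℕ) : ℝ) := by push_cast; ring
  _ ≤ (nMax k d : ℝ) := by exact_mod_cast hle
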